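/- Let Ω be a face-minimal d-dimensional cycle with vertex set V, not d-complete, contained in a simplicial complex Γ. If over Z/2Z the sum of the d-faces of Ω is a d-boundary of a (d+1)-chain of faces of the induced subcomplex Γ_V, then Ω has a chord set in Γ. -/

import Mathlib

namespace ConnonFaridi

open Finset
open scoped Classical

noncomputable section

variable {V : Type*} [Fintype V] [DecidableEq V]

/-- An abstract simplicial complex on vertex type `V`: a family of faces closed under subsets. -/
def IsComplex (K : Finset (Finset V)) : Prop :=
  ∀ F ∈ K, ∀ F' ⊆ F, F' ∈ K

/-- The vertex set of a complex. -/
def verts (K : Finset (Finset V)) : Finset V := K.sup id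

/-- `K` is pure of dimension `n`: every face is contained in a face of dimension `n`. -/
def IsPureDim (n : ℕ) (K : Finset (Finset V)) : Prop :=
  ∀ F ∈ K, ∃ G ∈ K, F ⊆ G ∧ G.card = n + 1

/-- The pure d-skeleton: the complex generated by (downward closure of) the d-faces of `K`. -/
def skeleton (d : ℕ) (K : Finset (Finset V)) : Finset (Finset V) :=
  (K.filter fun G => G.card = d + 1).biUnion Finset.powerset

/-- The d-closure of a (pure d-dimensional) complex `K`, relative to the vertex set `W`:
faces are all subsets of `W` of size at most `d`, together with those subsets all of whose
(d+1)-element subsets are faces of `K`. -/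
def closureOn (W : Finset V) (d : ℕ) (K : Finset (Finset V)) : Finset (Finset V) :=
  W.powerset.filter fun S => S.card ≤ d ∨ ∀ T ⊆ S, T.card = d + 1 → T ∈ K

/-- The d-closure `Δ_d(K)` on the vertex set of `K`. -/
def closure (d : ℕ) (K : Finset (Finset V)) : Finset (Finset V) :=
  closureOn (verts K) d K

/-- The induced subcomplex of `K` on the vertex set `W`. -/
def induced (K : Finset (Finset V)) (W : Finset V) : Finset (Finset V) :=
  K.filter fun F => F ⊆ W

/-- The Z/2 simplicial boundary of a chain, encoded as the finset of faces with coefficient 1: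
the boundary consists of those sets which are codimension-one subsets of an odd number of
members of the chain. (For a chain of vertices this is the reduced/augmented boundary.) -/
def bdry (c : Finset (Finset V)) : Finset (Finset V) :=
  (c.biUnion Finset.powerset).filter fun T =>
    Odd ((c.filter fun F => T ⊆ F ∧ T.card + 1 = F.card).card)

/-- Two d-faces of the family `c` are adjacent if they intersect in a (d-1)-face. -/
def adjOn (d : ℕ) (c : Finset (Finset V)) (A B : Finset V) : Prop :=
  A ∈ c ∧ B ∈ c ∧ (A ∩ B).card = d

/-- A d-dimensional cycle, recorded by its set `Ω` of d-faces: a nonempty pure d-dimensional,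
d-path-connected complex in which every (d-1)-face lies in an even number of d-faces. -/
def IsCycleFaces (d : ℕ) (Ω : Finset (Finset V)) : Prop :=
  Ω.Nonempty ∧ (∀ F ∈ Ω, F.card = d + 1) ∧
    (∀ F ∈ Ω, ∀ G ∈ Ω, Relation.ReflTransGen (adjOn d Ω) F G) ∧
    ∀ T : Finset V, T.card = d → Even ((Ω.filter fun F => T ⊆ F).card)

/-- A d-dimensional cycle is face-minimal if no proper subset of its d-faces is a
d-dimensional cycle. -/
def FaceMinimal (d : ℕ) (Ω : Finset (Finset V)) : Prop :=
  ∀ Ω' ⊂ Ω, ¬ IsCycleFaces d Ω'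

/-- The complex generated by `Ω` is j-complete: it contains all j-faces on its vertex set. -/
def CompleteOn (j : ℕ) (Ω : Finset (Finset V)) : Prop :=
  ∀ S ⊆ verts Ω, S.card = j + 1 → ∃ F ∈ Ω, S ⊆ F

/-- `C` is a chord set of the d-dimensional cycle `Ω` in the complex `Γ` (Connon–Faridi). -/
def IsChordSet (d : ℕ) (Γ Ω C : Finset (Finset V)) : Prop :=
  (∀ F ∈ C, F ∈ Γ ∧ F.card = d + 1 ∧ F ∉ Ω) ∧
  ∃ L : List (Finset (Finset V)), 2 ≤ L.length ∧
    (∀ Ωi ∈ L, IsCycleFaces d Ωi ∧ (∀ F ∈ Ωi, F ∈ C ∪ Ω) ∧ (verts Ωi).card < (verts Ω).card) ∧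
    (∀ F ∈ C ∪ Ω, ∃ Ωi ∈ L, F ∈ Ωi) ∧
    (∀ F ∈ C, Even (L.countP fun Ωi => decide (F ∈ Ωi))) ∧
    (∀ F ∈ Ω, Odd (L.countP fun Ωi => decide (F ∈ Ωi)))

/-- `Γ` is d-chorded: it is pure of dimension `d ≥ 1` and every face-minimal, non-d-complete
d-dimensional cycle in `Γ` has a chord set in `Γ`. -/
def IsChorded (d : ℕ) (Γ : Finset (Finset V)) : Prop :=
  1 ≤ d ∧ IsPureDim d Γ ∧
    ∀ Ω ⊆ Γ, IsCycleFaces d Ω → FaceMinimal d Ω → ¬ CompleteOn d Ω →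
      ∃ C, IsChordSet d Γ Ω C

/-- The reduced simplicial homology of `K` over Z/2 vanishes in dimension `i`:
every homological i-cycle is an i-boundary. -/
def HVanishes (K : Finset (Finset V)) (i : ℕ) : Prop :=
  ∀ c : Finset (Finset V), (∀ F ∈ c, F ∈ K ∧ F.card = i + 1) → bdry c = ∅ →
    ∃ c' : Finset (Finset V), (∀ F ∈ c', F ∈ K ∧ F.card = i + 2) ∧ bdry c' = c

/-- The Stanley–Reisner complex of the square-free monomial ideal generated by the
sets (monomials) in `𝒢`: faces are the sets containing no generator. -/
def stanleyReisner (𝒢 : Finset (Finset V)) : Finset (Finset V) :=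
  Finset.univ.powerset.filter fun S => ∀ G ∈ 𝒢, ¬ G ⊆ S

/-- The facet complex of the square-free monomial ideal generated by `𝒢`. -/
def facetCx (𝒢 : Finset (Finset V)) : Finset (Finset V) :=
  Finset.univ.powerset.filter fun S => ∃ G ∈ 𝒢, S ⊆ G

/-- The d-complement of `K`: the complex whose facets are the (d+1)-element sets
that are not faces of `K`. -/
def dComplement (d : ℕ) (K : Finset (Finset V)) : Finset (Finset V) :=
  Finset.univ.powerset.filter fun S => ∃ T, S ⊆ T ∧ T.card = d + 1 ∧ T ∉ K

/-- The ideal generated by the square-free degree-(d+1) monomials `𝒢` has a (d+1)-linear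
resolution over a field of characteristic 2.  (Formalized via Fröberg's criterion, which over a
field of characteristic 2 amounts to the vanishing of the reduced Z/2 homology of all induced
subcomplexes of the Stanley–Reisner complex in every dimension `i ≠ (d+1) - 2`.) -/
def HasLinRes (d : ℕ) (𝒢 : Finset (Finset V)) : Prop :=
  ∀ (W : Finset V) (i : ℕ), i ≠ d - 1 → HVanishes (induced (stanleyReisner 𝒢) W) i

/-- A graph is chordal if every cycle of length at least 4 has a chord. -/
def IsChordalGraph (G : SimpleGraph V) : Prop :=
  ∀ (v : V) (p : G.Walk v v), p.IsCycle → 4 ≤ p.length →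
    ∃ u w, u ∈ p.support ∧ w ∈ p.support ∧ G.Adj u w ∧ s(u, w) ∉ p.edges

/-- The clique complex of a graph. -/
def cliqueCx (G : SimpleGraph V) : Finset (Finset V) :=
  Finset.univ.powerset.filter fun S => G.IsClique (S : Set V)

/-- A graph viewed as a pure 1-dimensional simplicial complex (faces: subsets of edges). -/
def graphCx (G : SimpleGraph V) : Finset (Finset V) :=
  Finset.univ.powerset.filter fun S => ∃ u v, G.Adj u v ∧ S ⊆ ({u, v} : Finset V)

/-- The generating set of the edge ideal of a graph: its edges as 2-element sets. -/
def edgeGens (G : SimpleGraph V) : Finset (Finset V) :=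
  Finset.univ.powerset.filter fun S => ∃ u v, G.Adj u v ∧ S = {u, v}


/-- boundary-of-simplex: the set of (d+1)-element subsets of `B`. -/
def sB (d : ℕ) (B : Finset V) : Finset (Finset V) :=
  B.powerset.filter fun S => S.card = d + 1

lemma mem_sB {d : ℕ} {B F : Finset V} : F ∈ sB d B ↔ F ⊆ B ∧ F.card = d + 1 := by
  simp [sB]

lemma verts_sB {d : ℕ} {B : Finset V} (hB : d + 1 ≤ B.card) : verts (sB d B) = B := by
  apply Finset.Subset.antisymm
  · intro v hv
    obtain ⟨F, hF, hvF⟩ := Finset.mem_sup.mp hv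
    exact (mem_sB.mp hF).1 hvF
  · intro v hv
    have hc : d ≤ (B.erase v).card := by
      rw [Finset.card_erase_of_mem hv]; omega
    obtain ⟨T, hTB, hTc⟩ := Finset.exists_subset_card_eq hc
    have hvT : v ∉ T := fun h => (Finset.mem_erase.mp (hTB h)).1 rfl
    have hF : insert v T ∈ sB d B := by
      refine mem_sB.mpr ⟨?_, ?_⟩
      · exact Finset.insert_subset hv (hTB.trans (Finset.erase_subset _ _))
      · rw [Finset.card_insert_of_notMem hvT, hTc]
    exact Finset.mem_sup.mpr ⟨_, hF, Finset.mem_insert_self _ _⟩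

lemma count_sB {d : ℕ} {B : Finset V} (hB : B.card = d + 2) {T : Finset V}
    (hT : T.card = d) : ((sB d B).filter fun F => T ⊆ F).card = if T ⊆ B then 2 else 0 := by
  split_ifs with hTB
  · have himg : (sB d B).filter (fun F => T ⊆ F) = (B \ T).image (fun v => insert v T) := by
      ext F
      simp only [Finset.mem_filter, mem_sB, Finset.mem_image, Finset.mem_sdiff]
      constructor
      · rintro ⟨⟨hFB, hFc⟩, hTF⟩
        have : (F \ T).Nonempty := by
          rw [← Finset.card_pos, Finset.card_sdiff_of_subset hTF, hFc, hT]; omega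
        obtain ⟨v, hv⟩ := this
        rw [Finset.mem_sdiff] at hv
        refine ⟨v, ⟨hFB hv.1, hv.2⟩, ?_⟩
        apply Finset.eq_of_subset_of_card_le (Finset.insert_subset hv.1 hTF)
        rw [Finset.card_insert_of_notMem hv.2, hFc, hT]
      · rintro ⟨v, ⟨hvB, hvT⟩, rfl⟩
        exact ⟨⟨Finset.insert_subset hvB hTB, by rw [Finset.card_insert_of_notMem hvT, hT]⟩,
          Finset.subset_insert _ _⟩
    rw [himg, Finset.card_image_of_injOn, Finset.card_sdiff_of_subset hTB, hB, hT]
    · omega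
    · intro a ha b hb hab
      rw [Finset.mem_coe, Finset.mem_sdiff] at ha hb
      simp only at hab
      have : a ∈ insert b T := hab ▸ Finset.mem_insert_self a T
      rcases Finset.mem_insert.mp this with h | h
      · exact h
      · exact absurd h ha.2
  · rw [Finset.filter_eq_empty_iff.mpr, Finset.card_empty]
    intro F hF hTF
    exact hTB (hTF.trans (mem_sB.mp hF).1)

lemma sB_cycle {d : ℕ} {B : Finset V} (hB : B.card = d + 2) : IsCycleFaces d (sB d B) := by
  refine ⟨?_, fun F hF => (mem_sB.mp hF).2, ?_, ?_⟩
  · obtain ⟨T, hTB, hTc⟩ := Finset.exists_subset_card_eq (show d + 1 ≤ B.card by omega)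
    exact ⟨T, mem_sB.mpr ⟨hTB, hTc⟩⟩
  · intro F hF G hG
    rcases eq_or_ne F G with rfl | hne
    · exact Relation.ReflTransGen.refl
    · refine Relation.ReflTransGen.single ⟨hF, hG, ?_⟩
      obtain ⟨hFB, hFc⟩ := mem_sB.mp hF
      obtain ⟨hGB, hGc⟩ := mem_sB.mp hG
      have h1 : (F ∪ G).card + (F ∩ G).card = (d + 1) + (d + 1) := by
        rw [Finset.card_union_add_card_inter, hFc, hGc]
      have h2 : (F ∪ G).card ≤ d + 2 := hB ▸ Finset.card_le_card (Finset.union_subset hFB hGB)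
      have h3 : (F ∩ G).card < d + 1 := by
        have hsub : F ∩ G ⊂ F := by
          refine Finset.ssubset_iff_subset_ne.mpr ⟨Finset.inter_subset_left, fun h => hne ?_⟩
          exact Finset.eq_of_subset_of_card_le (h ▸ Finset.inter_subset_right) (by omega)
        exact hFc ▸ Finset.card_lt_card hsub
      omega
  · intro T hT
    rw [count_sB hB hT]
    split_ifs <;> simp

lemma countP_toList (s : Finset (Finset V)) (p : Finset V → Bool) :
    s.toList.countP p = (s.filter fun b => p b = true).card := by
  have h : p = fun b => decide (p b = true) := by
    funext b; cases hpb : p b <;> simp [hpb]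
  rw [h, ← Multiset.coe_countP (fun b => p b = true), Finset.coe_toList,
    Finset.card_def, Finset.filter_val, Multiset.countP_eq_card_filter]
  congr 1
  apply Multiset.filter_congr
  intro b _
  simp

lemma bdry_empty : bdry (∅ : Finset (Finset V)) = ∅ := by simp [bdry]

lemma bdry_singleton {d : ℕ} {B : Finset V} (hB : B.card = d + 2) :
    bdry {B} = sB d B := by
  ext T
  rw [bdry, Finset.mem_filter, mem_sB]
  simp only [Finset.singleton_biUnion, Finset.mem_powerset, Finset.filter_singleton]
  constructor
  · rintro ⟨hTB, hodd⟩
    refine ⟨hTB, ?_⟩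
    split_ifs at hodd with h
    · omega
    · simp at hodd
  · rintro ⟨hTB, hTc⟩
    refine ⟨hTB, ?_⟩
    rw [if_pos ⟨hTB, by omega⟩]
    simp

lemma mem_bdry_iff {d : ℕ} {c' : Finset (Finset V)} (hc : ∀ B ∈ c', B.card = d + 2)
    {F : Finset V} (hF : F.card = d + 1) :
    F ∈ bdry c' ↔ Odd ((c'.filter fun B => F ⊆ B).card) := by
  rw [bdry, Finset.mem_filter]
  have heq : (c'.filter fun B => F ⊆ B ∧ F.card + 1 = B.card) = c'.filter fun B => F ⊆ B := by
    apply Finset.filter_congr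
    intro B hB
    have := hc B hB
    simp only [hF, this, eq_iff_iff]
    constructor
    · exact fun h => h.1
    · exact fun h => ⟨h, trivial⟩
  constructor
  · rintro ⟨_, h⟩; rwa [heq] at h
  · intro h
    obtain ⟨B, hBmem⟩ := Finset.card_pos.mp h.pos
    rw [Finset.mem_filter] at hBmem
    exact ⟨Finset.mem_biUnion.mpr ⟨B, hBmem.1, Finset.mem_powerset.mpr hBmem.2⟩, heq ▸ h⟩

/-- If a face-minimal, non-d-complete d-dimensional cycle Ω in Γ is, over Z/2,
the boundary of a (d+1)-chain of faces of the induced subcomplex Γ_{V(Ω)}, then Ω has a chord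
set in Γ. -/
theorem stmt14 (d : ℕ) (hd : 1 ≤ d) (Γ Ω : Finset (Finset V)) (hΓ : IsComplex Γ)
    (hΩΓ : Ω ⊆ Γ) (hΩ : IsCycleFaces d Ω) (hmin : FaceMinimal d Ω) (hnc : ¬ CompleteOn d Ω)
    (c' : Finset (Finset V)) (hc' : ∀ B ∈ c', B ∈ induced Γ (verts Ω) ∧ B.card = d + 2)
    (hbd : bdry c' = Ω) :
    ∃ C, IsChordSet d Γ Ω C := by
  obtain ⟨hΩne, hΩcard, _, _⟩ := hΩ
  have hc'' : ∀ B ∈ c', B ⊆ verts Ω ∧ B.card = d + 2 ∧ B ∈ Γ := by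
    intro B hB
    obtain ⟨h1, h2⟩ := hc' B hB
    rw [induced, Finset.mem_filter] at h1
    exact ⟨h1.2, h2, h1.1⟩
  have hcards : ∀ B ∈ c', B.card = d + 2 := fun B hB => (hc'' B hB).2.1
  have hne : c'.Nonempty := by
    rcases Finset.eq_empty_or_nonempty c' with rfl | h
    · rw [bdry_empty] at hbd
      exact absurd hbd.symm (Finset.nonempty_iff_ne_empty.mp hΩne)
    · exact h
  have hone : c'.card ≠ 1 := by
    intro h1
    obtain ⟨B, rfl⟩ := Finset.card_eq_one.mp h1
    have hB2 : B.card = d + 2 := hcards B (Finset.mem_singleton_self B)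
    have hΩeq : Ω = sB d B := by rw [← hbd, bdry_singleton hB2]
    apply hnc
    intro S hS hScard
    have hv : verts Ω = B := by rw [hΩeq]; exact verts_sB (by omega)
    refine ⟨S, ?_, subset_refl S⟩
    rw [hΩeq, mem_sB]
    exact ⟨hv ▸ hS, hScard⟩
  have h2c : 2 ≤ c'.card := by
    have := Finset.card_pos.mpr hne
    omega
  have hbig : d + 2 < (verts Ω).card := by
    obtain ⟨B₁, hB₁, B₂, hB₂, hne12⟩ := Finset.one_lt_card.mp h2c
    have hsub : ¬ B₂ ⊆ B₁ := fun h => hne12 (Finset.eq_of_subset_of_card_le h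
      (by rw [hcards B₁ hB₁, hcards B₂ hB₂])).symm
    obtain ⟨v, hv2, hv1⟩ := Finset.not_subset.mp hsub
    have hins : insert v B₁ ⊆ verts Ω :=
      Finset.insert_subset ((hc'' B₂ hB₂).1 hv2) (hc'' B₁ hB₁).1
    have hle := Finset.card_le_card hins
    rw [Finset.card_insert_of_notMem hv1, hcards B₁ hB₁] at hle
    omega
  set C := (c'.biUnion fun B => sB d B) \ Ω with hCdef
  have hΩsub : ∀ F ∈ Ω, ∃ B ∈ c', F ∈ sB d B := by
    intro F hF
    have hF' : F ∈ bdry c' := by rw [hbd]; exact hF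
    have hodd := (mem_bdry_iff hcards (hΩcard F hF)).mp hF'
    obtain ⟨B, hB⟩ := Finset.card_pos.mp hodd.pos
    rw [Finset.mem_filter] at hB
    exact ⟨B, hB.1, mem_sB.mpr ⟨hB.2, hΩcard F hF⟩⟩
  have hCunion : ∀ F, F ∈ C ∪ Ω ↔ ∃ B ∈ c', F ∈ sB d B := by
    intro F
    constructor
    · intro h
      rcases Finset.mem_union.mp h with h | h
      · exact Finset.mem_biUnion.mp (Finset.mem_sdiff.mp h).1
      · exact hΩsub F h
    · rintro ⟨B, hB, hFB⟩
      by_cases hFΩ : F ∈ Ω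
      · exact Finset.mem_union_right _ hFΩ
      · exact Finset.mem_union_left _
          (Finset.mem_sdiff.mpr ⟨Finset.mem_biUnion.mpr ⟨B, hB, hFB⟩, hFΩ⟩)
  have hcount : ∀ F : Finset V, F.card = d + 1 →
      ((c'.toList.map fun B => sB d B).countP fun Ωi => decide (F ∈ Ωi))
        = (c'.filter fun B => F ⊆ B).card := by
    intro F hFc
    rw [List.countP_map, countP_toList]
    congr 1
    apply Finset.filter_congr
    intro B _
    simp only [Function.comp, decide_eq_true_eq, mem_sB, eq_iff_iff]
    constructor
    · exact fun h => h.1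
    · exact fun h => ⟨h, hFc⟩
  refine ⟨C, ?_, (c'.toList.map fun B => sB d B), ?_, ?_, ?_, ?_, ?_⟩
  · intro F hF
    rw [hCdef, Finset.mem_sdiff, Finset.mem_biUnion] at hF
    obtain ⟨⟨B, hB, hFB⟩, hFΩ⟩ := hF
    obtain ⟨hFsub, hFc⟩ := mem_sB.mp hFB
    exact ⟨hΓ B (hc'' B hB).2.2 F hFsub, hFc, hFΩ⟩
  · rw [List.length_map, Finset.length_toList]
    exact h2c
  · intro Ωi hΩi
    obtain ⟨B, hB, rfl⟩ := List.mem_map.mp hΩi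
    have hB' : B ∈ c' := Finset.mem_toList.mp hB
    have hB2 := hcards B hB'
    refine ⟨sB_cycle hB2, ?_, ?_⟩
    · intro F hF
      exact (hCunion F).mpr ⟨B, hB', hF⟩
    · rw [verts_sB (by omega), hB2]
      exact hbig
  · intro F hF
    obtain ⟨B, hB, hFB⟩ := (hCunion F).mp hF
    exact ⟨sB d B, List.mem_map_of_mem (Finset.mem_toList.mpr hB), hFB⟩
  · intro F hF
    have hF' := hF
    rw [hCdef, Finset.mem_sdiff, Finset.mem_biUnion] at hF'
    obtain ⟨⟨B, hB, hFB⟩, hFΩ⟩ := hF'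
    obtain ⟨hFsub, hFc⟩ := mem_sB.mp hFB
    rw [hcount F hFc]
    rw [← Nat.not_odd_iff_even]
    intro hodd
    apply hFΩ
    rw [← hbd]
    exact (mem_bdry_iff hcards hFc).mpr hodd
  · intro F hF
    rw [hcount F (hΩcard F hF)]
    have hF' : F ∈ bdry c' := by rw [hbd]; exact hF
    exact (mem_bdry_iff hcards (hΩcard F hF)).mp hF'


end

end ConnonFaridi
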